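/- Under Assumptions A1–A5 (in particular A4: X^⊤ M X = M), the operators S := −I + α (M + X^⊤ M X) T Ã^{-1} T^⊤ and d := α X^⊤ (M + X^⊤ M X) T Ã^{-1} f simplify to S = −I + 2α M T Ã^{-1} T^⊤ and d = 2α X^⊤ M T Ã^{-1} f, where Ã := A + α T^⊤ M T. Moreover, for any (v, σ) ∈ U × Λ* satisfying the homogeneous equation A v − T^⊤ σ = 0, the scattering operator maps the incoming impedance trace to the outgoing one: S (α M T v + σ) = α M T v − σ. -/

import Mathlib

/-- The transpose (dual map) `B^⊤ : Y* → X*` of a bounded linear operator `B : X → Y`. -/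
noncomputable def trOp {X Y : Type*} [NormedAddCommGroup X] [NormedSpace ℂ X]
    [NormedAddCommGroup Y] [NormedSpace ℂ Y] (B : X →L[ℂ] Y) :
    (Y →L[ℂ] ℂ) →L[ℂ] (X →L[ℂ] ℂ) :=
  (ContinuousLinearMap.compL ℂ X Y ℂ).flip B

/-- under A1–A5 the scattering operator and data simplify to
`S = −I + 2α M T Ã⁻¹ T^⊤` and `d = 2α X^⊤ M T Ã⁻¹ f`; moreover, for `(v, σ)` with
`A v − T^⊤ σ = 0`, `S` maps the incoming impedance trace `α M T v + σ` to the outgoing one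
`α M T v − σ`. -/
theorem statement9
    {Uhat U Lam : Type*}
    [NormedAddCommGroup Uhat] [InnerProductSpace ℂ Uhat] [CompleteSpace Uhat]
    [NormedAddCommGroup U] [InnerProductSpace ℂ U] [CompleteSpace U]
    [NormedAddCommGroup Lam] [InnerProductSpace ℂ Lam] [CompleteSpace Lam]
    (R : Uhat →L[ℂ] U) (T : U →L[ℂ] Lam) (X : Lam →L[ℂ] Lam)
    -- Assumption A1
    (hRinj : LinearMap.ker (R : Uhat →ₗ[ℂ] U) = ⊥)
    (hRclosed : IsClosed (Set.range R))
    -- Assumption A2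
    (hX2 : X.comp X = ContinuousLinearMap.id ℂ Lam)
    (hA2 : LinearMap.range (R : Uhat →ₗ[ℂ] U) = LinearMap.ker (((ContinuousLinearMap.id ℂ Lam - X).comp T : U →L[ℂ] Lam) : U →ₗ[ℂ] Lam))
    (A : U →L[ℂ] (U →L[ℂ] ℂ)) (f : U →L[ℂ] ℂ)
    -- `Â = R^⊤ A R` bijective with bounded inverse
    (Ahatinv : (Uhat →L[ℂ] ℂ) →L[ℂ] Uhat)
    (hAhat_left : ∀ uhat : Uhat, Ahatinv (trOp R (A (R uhat))) = uhat)
    (hAhat_right : ∀ g : Uhat →L[ℂ] ℂ, trOp R (A (R (Ahatinv g))) = g)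
    (α : ℂ) (hα : α ≠ 0)
    (M : Lam →L[ℂ] (Lam →L[ℂ] ℂ))
    -- Assumption A3: `M + X^⊤ M X` has a bounded inverse
    (Ninv : (Lam →L[ℂ] ℂ) →L[ℂ] Lam)
    (hNl : ∀ l : Lam, Ninv ((M + (trOp X).comp (M.comp X)) l) = l)
    (hNr : ∀ μ : Lam →L[ℂ] ℂ, (M + (trOp X).comp (M.comp X)) (Ninv μ) = μ)
    -- Assumption A4
    (hA4 : (trOp X).comp (M.comp X) = M)
    -- Assumption A5: `Ã = A + α T^⊤ M T` has a bounded inverse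
    (Atinv : (U →L[ℂ] ℂ) →L[ℂ] U)
    (hAt_l : ∀ u : U, Atinv ((A + α • ((trOp T).comp (M.comp T))) u) = u)
    (hAt_r : ∀ g : U →L[ℂ] ℂ, (A + α • ((trOp T).comp (M.comp T))) (Atinv g) = g) :
    -- the scattering operator simplifies
    (-(ContinuousLinearMap.id ℂ (Lam →L[ℂ] ℂ)) +
        α • (((M + (trOp X).comp (M.comp X)).comp T).comp (Atinv.comp (trOp T))) =
      -(ContinuousLinearMap.id ℂ (Lam →L[ℂ] ℂ)) +
        (2 * α) • ((M.comp T).comp (Atinv.comp (trOp T)))) ∧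
    -- the data simplify
    (α • trOp X ((M + (trOp X).comp (M.comp X)) (T (Atinv f))) =
      (2 * α) • trOp X (M (T (Atinv f)))) ∧
    -- scattering property
    (∀ (v : U) (σ : Lam →L[ℂ] ℂ), A v - trOp T σ = 0 →
      (-(ContinuousLinearMap.id ℂ (Lam →L[ℂ] ℂ)) +
        (2 * α) • ((M.comp T).comp (Atinv.comp (trOp T)))) (α • M (T v) + σ) =
      α • M (T v) - σ) := by
  have hMX : ∀ l, trOp X (M (X l)) = M l := fun l =>
    congrFun (congrArg (fun g => (g : Lam → (Lam →L[ℂ] ℂ))) (congrArg DFunLike.coe hA4)) l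
  refine ⟨?_, ?_, ?_⟩
  · ext μ l
    simp only [ContinuousLinearMap.add_apply, ContinuousLinearMap.coe_comp',
      Function.comp_apply, ContinuousLinearMap.smul_apply, ContinuousLinearMap.neg_apply,
      ContinuousLinearMap.id_apply, ContinuousLinearMap.add_apply]
    rw [hMX]
    simp only [ContinuousLinearMap.add_apply, ContinuousLinearMap.smul_apply, smul_eq_mul]
    ring
  · ext l
    have : (M + (trOp X).comp (M.comp X)) (T (Atinv f)) = (2 : ℂ) • M (T (Atinv f)) := by
      simp only [ContinuousLinearMap.add_apply, ContinuousLinearMap.coe_comp',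
        Function.comp_apply]
      rw [hMX]
      exact (two_smul ℂ _).symm
    rw [this, map_smul, smul_smul, mul_comm α 2]
  · intro v σ hvσ
    have hv : A v = trOp T σ := sub_eq_zero.mp hvσ
    have h1 : (A + α • ((trOp T).comp (M.comp T))) v = trOp T (α • M (T v) + σ) := by
      simp only [ContinuousLinearMap.add_apply, ContinuousLinearMap.smul_apply,
        ContinuousLinearMap.coe_comp', Function.comp_apply]
      rw [hv, map_add, map_smul]
      abel
    have hkey : Atinv (trOp T (α • M (T v) + σ)) = v := by
      rw [← h1, hAt_l]
    simp only [ContinuousLinearMap.add_apply, ContinuousLinearMap.coe_comp',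
      Function.comp_apply, ContinuousLinearMap.neg_apply, ContinuousLinearMap.id_apply,
      ContinuousLinearMap.smul_apply]
    rw [hkey, two_mul, (add_smul α α (M (T v)) : _)]
    abel
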